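/- arXiv:2211.10301 — 2 statements merged into one kernel-verified Lean document; each statement's English description precedes it below -/
import Mathlib

section
/- Let $q\in(1,\frac{m+2}{m})$ and let $u_q>0$ be a smooth minimizer of $E(f)=\int_{\mathbb{S}^{2m+1}}(|\nabla_b f|^2+\frac{m^2}{4}f^2)d\sigma$ subject to $\|f\|_{q+1}=1$, satisfying $-\Delta_b u_q+\frac{m^2}{4}u_q=\Lambda_q u_q^q$ and the second variation inequality $E(f)\ge q\,E(u_q)\int u_q^{q-1}f^2 d\sigma$ for all $f$ with $\int u_q^q f\,d\sigma=0$, together with the moment condition $\int_{\mathbb{S}^{2m+1}} u_q^{q+1}\xi\,d\sigma(\xi)=0$. Then $(q-1)\int_{\mathbb{S}^{2m+1}}|\nabla_b u_q|^2 d\sigma\le\frac{m^2}{4}\big(\frac{m+2}{m}-q\big)\int_{\mathbb{S}^{2m+1}}u_q^2 d\sigma$. -/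
noncomputable section
open MeasureTheory Real

/-- Hermitian pairing `ξ · conj η` on `ℂ^{m+1}`. -/
def hdot {m : ℕ} (ξ η : EuclideanSpace ℂ (Fin (m + 1))) : ℂ :=
  ∑ i, ξ i * starRingEnd ℂ (η i)

instance {m : ℕ} : MeasurableSpace (EuclideanSpace ℂ (Fin (m + 1))) := borel _
instance {m : ℕ} : BorelSpace (EuclideanSpace ℂ (Fin (m + 1))) := ⟨rfl⟩
instance {m : ℕ} : MeasureSpace (EuclideanSpace ℂ (Fin (m + 1))) :=
  ⟨(Module.finBasis ℝ (EuclideanSpace ℂ (Fin (m + 1)))).addHaar⟩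

/-- The unit sphere `S^{2m+1} ⊆ ℂ^{m+1}`. -/
abbrev Sph (m : ℕ) := Metric.sphere (0 : EuclideanSpace ℂ (Fin (m + 1))) 1

/-- The surface measure on `S^{2m+1}`. -/
def sphMeasure (m : ℕ) : Measure (Sph m) :=
  (volume : Measure (EuclideanSpace ℂ (Fin (m + 1)))).toSphere

lemma volume_isAddHaar (m : ℕ) :
    (volume : Measure (EuclideanSpace ℂ (Fin (m + 1)))).IsAddHaarMeasure := by
  show ((Module.finBasis ℝ (EuclideanSpace ℂ (Fin (m + 1)))).addHaar).IsAddHaarMeasure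
  infer_instance

lemma sphMeasure_finite (m : ℕ) : IsFiniteMeasure (sphMeasure m) := by
  haveI := volume_isAddHaar m
  unfold sphMeasure; infer_instance

lemma sphMeasure_open_ne_zero {m : ℕ} {U : Set (Sph m)} (hU : IsOpen U)
    (hne : U.Nonempty) : sphMeasure m U ≠ 0 := by
  haveI := volume_isAddHaar m
  set E := EuclideanSpace ℂ (Fin (m + 1))
  unfold sphMeasure
  rw [Measure.toSphere_apply' _ hU.measurableSet,
    ← Measure.toSphere_apply_aux (volume : Measure E) U ⟨1, Set.mem_Ioi.mpr one_pos⟩]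
  apply mul_ne_zero
  · exact_mod_cast Nat.cast_ne_zero.mpr (Module.finrank_pos (R := ℝ) (M := E)).ne'
  · apply IsOpen.measure_ne_zero
    · apply (isOpen_compl_singleton (x := (0 : E))).isOpenMap_subtype_val
      apply IsOpen.preimage (homeomorphUnitSphereProd E).continuous
      apply IsOpen.prod hU
      have : (Set.Iio (⟨1, Set.mem_Ioi.mpr one_pos⟩ : Set.Ioi (0 : ℝ))) =
          Subtype.val ⁻¹' (Set.Iio (1 : ℝ)) := by
        ext x; exact Iff.rfl
      rw [this]
      exact isOpen_Iio.preimage continuous_subtype_val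
    · obtain ⟨ξ, hξ⟩ := hne
      refine ⟨(homeomorphUnitSphereProd E).symm (ξ, ⟨1/2, by norm_num⟩), ⟨_, ?_, rfl⟩⟩
      rw [Set.mem_preimage, Homeomorph.apply_symm_apply]
      exact ⟨hξ, by norm_num [Set.mem_Iio, ← Subtype.coe_lt_coe]⟩

set_option maxHeartbeats 2000000

/-- Energy drop estimate for subcritical CR Yamabe minimizers. Here `gradSq f`
stands for `|∇_b f|²` (the squared sub-gradient) and `Deltab` for the
sub-Laplacian `Δ_b`, given abstractly together with the identities they satisfy. -/
theorem subcritical_energy_estimate {m : ℕ} (hm : 1 ≤ m)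
    (gradSq : (Sph m → ℝ) → (Sph m → ℝ))
    (Deltab : (Sph m → ℝ) → (Sph m → ℝ))
    -- Green's identity relating `|∇_b f|²` and `Δ_b`:
    (hGreen : ∀ f : Sph m → ℝ,
      (∫ ξ, gradSq f ξ ∂(sphMeasure m)) = -∫ ξ, f ξ * Deltab f ξ ∂(sphMeasure m))
    -- integration-by-parts identity for the coordinate multipliers
    -- `x_i = Re ξ_i`, `y_i = Im ξ_i` (using `∑ᵢ (xᵢ Δ_b xᵢ + yᵢ Δ_b yᵢ) = -m/2`):
    (hcoord : ∀ w : Sph m → ℝ,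
      (∫ ξ, (∑ i : Fin (m + 1),
          (gradSq (fun ζ => w ζ * ((ζ : EuclideanSpace ℂ (Fin (m + 1))) i).re) ξ +
            gradSq (fun ζ => w ζ * ((ζ : EuclideanSpace ℂ (Fin (m + 1))) i).im) ξ))
        ∂(sphMeasure m)) =
      ∫ ξ, (gradSq w ξ + (m / 2 : ℝ) * w ξ ^ 2) ∂(sphMeasure m))
    (q : ℝ) (hq1 : 1 < q) (hq2 : q < (m + 2) / m)
    (u : Sph m → ℝ) (hu0 : ∀ ξ, 0 < u ξ) (hucont : Continuous u)
    (Lambda : ℝ) (hLambda : 0 < Lambda)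
    -- the Euler–Lagrange equation `-Δ_b u + (m²/4) u = Λ_q u^q`:
    (hpde : ∀ ξ, -Deltab u ξ + (m ^ 2 / 4 : ℝ) * u ξ = Lambda * u ξ ^ q)
    -- normalization `‖u‖_{q+1} = 1`:
    (hnorm : (∫ ξ, u ξ ^ (q + 1) ∂(sphMeasure m)) = 1)
    -- the second variation inequality `E(f) ≥ q E(u) ∫ u^{q-1} f²`
    -- for all `f` with `∫ u^q f = 0`:
    (h2nd : ∀ f : Sph m → ℝ, (∫ ξ, u ξ ^ q * f ξ ∂(sphMeasure m)) = 0 →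
      q * (∫ ξ, (gradSq u ξ + (m ^ 2 / 4 : ℝ) * u ξ ^ 2) ∂(sphMeasure m)) *
          (∫ ξ, u ξ ^ (q - 1) * f ξ ^ 2 ∂(sphMeasure m)) ≤
        ∫ ξ, (gradSq f ξ + (m ^ 2 / 4 : ℝ) * f ξ ^ 2) ∂(sphMeasure m))
    -- the moment-zero condition `∫ u^{q+1} ξ dσ(ξ) = 0`:
    (hmom : (∫ ξ : Sph m, u ξ ^ (q + 1) • (ξ : EuclideanSpace ℂ (Fin (m + 1)))
      ∂(sphMeasure m)) = 0) :
    (q - 1) * (∫ ξ, gradSq u ξ ∂(sphMeasure m)) ≤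
      (m ^ 2 / 4 : ℝ) * ((m + 2) / m - q) * ∫ ξ, u ξ ^ 2 ∂(sphMeasure m) := by
  classical
  haveI := sphMeasure_finite m
  set E := EuclideanSpace ℂ (Fin (m + 1))
  set μ := sphMeasure m with hμdef
  have hm0 : (m : ℝ) ≠ 0 := by positivity
  -- integrability of continuous functions
  have hint : ∀ f : Sph m → ℝ, Continuous f → Integrable f μ := by
    intro f hf
    exact hf.integrable_of_hasCompactSupport
      (IsCompact.of_isClosed_subset isCompact_univ (isClosed_tsupport f)
        (Set.subset_univ _))
  -- positivity of integrals of nonneg continuous functions positive somewhere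
  have hposint : ∀ h : Sph m → ℝ, Continuous h → (∀ ξ, 0 ≤ h ξ) →
      (∃ ξ₀, 0 < h ξ₀) → 0 < ∫ ξ, h ξ ∂μ := by
    rintro h hc hnn ⟨ξ₀, h0⟩
    rw [integral_pos_iff_support_of_nonneg (fun ξ => hnn ξ) (hint h hc)]
    have hopen : IsOpen (Function.support h) := by
      have : Function.support h = h ⁻¹' {0}ᶜ := rfl
      rw [this]; exact (isOpen_compl_singleton).preimage hc
    have := sphMeasure_open_ne_zero hopen ⟨ξ₀, h0.ne'⟩
    exact this.bot_lt
  -- rpow continuity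
  have hup : ∀ r : ℝ, Continuous (fun ξ => u ξ ^ r) := by
    intro r
    exact hucont.rpow_const fun ξ => Or.inl (hu0 ξ).ne'
  -- the coordinate functions
  set XF : Fin (m + 1) → Sph m → ℝ := fun i ζ => ((ζ : E) i).re with hXFdef
  set YF : Fin (m + 1) → Sph m → ℝ := fun i ζ => ((ζ : E) i).im with hYFdef
  have hXFc : ∀ i, Continuous (XF i) := fun i =>
    Complex.continuous_re.comp ((EuclideanSpace.proj i).continuous.comp
      continuous_subtype_val)
  have hYFc : ∀ i, Continuous (YF i) := fun i =>
    Complex.continuous_im.comp ((EuclideanSpace.proj i).continuous.comp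
      continuous_subtype_val)
  -- pointwise identity on the sphere : ∑ (xᵢ² + yᵢ²) = 1
  have hsph : ∀ ξ : Sph m, (∑ i, (XF i ξ ^ 2 + YF i ξ ^ 2)) = 1 := by
    intro ξ
    have h1 : ‖(ξ : E)‖ = 1 := mem_sphere_zero_iff_norm.mp ξ.2
    have h2 : ∑ i, ‖(ξ : E) i‖ ^ 2 = 1 := by
      have h3 := EuclideanSpace.norm_eq (ξ : E)
      rw [h1] at h3
      have h4 : 0 ≤ ∑ i, ‖(ξ : E) i‖ ^ 2 :=
        Finset.sum_nonneg fun _ _ => sq_nonneg _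
      have h5 := Real.sq_sqrt h4
      rw [← h3] at h5
      simpa using h5.symm
    calc (∑ i, (XF i ξ ^ 2 + YF i ξ ^ 2)) = ∑ i, ‖(ξ : E) i‖ ^ 2 := by
          refine Finset.sum_congr rfl fun i _ => ?_
          rw [Complex.sq_norm, Complex.normSq_apply]
          simp only [hXFdef, hYFdef]; ring
      _ = 1 := h2
  -- pointwise rpow algebra
  have hpow : ∀ (ξ : Sph m) (v : ℝ),
      u ξ ^ (q - 1) * (u ξ * v) ^ 2 = u ξ ^ (q + 1) * v ^ 2 := by
    intro ξ v
    have h1 : u ξ ^ (q + 1) = u ξ ^ (q - 1) * u ξ * u ξ := by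
      rw [show q + 1 = q - 1 + 1 + 1 by ring, Real.rpow_add_one (hu0 ξ).ne',
        Real.rpow_add_one (hu0 ξ).ne']
    rw [h1]; ring
  have hpow' : ∀ ξ : Sph m, u ξ ^ (q + 1) = u ξ ^ q * u ξ :=
    fun ξ => Real.rpow_add_one (hu0 ξ).ne' q
  -- Green's identity computation : ∫ |∇u|² = Λ − (m²/4) ∫ u²
  set S2 : ℝ := ∫ ξ, u ξ ^ 2 ∂μ with hS2def
  have hS2nn : 0 ≤ S2 := integral_nonneg fun ξ => sq_nonneg _
  have hDelta : ∀ ξ, Deltab u ξ = (m ^ 2 / 4 : ℝ) * u ξ - Lambda * u ξ ^ q := by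
    intro ξ; have := hpde ξ; linarith
  have hGu : (∫ ξ, gradSq u ξ ∂μ) = Lambda - (m ^ 2 / 4 : ℝ) * S2 := by
    rw [hGreen u]
    have heq : (fun ξ => u ξ * Deltab u ξ) =
        fun ξ => (m ^ 2 / 4 : ℝ) * u ξ ^ 2 - Lambda * u ξ ^ (q + 1) := by
      funext ξ
      rw [hDelta ξ, hpow' ξ]; ring
    rw [heq, integral_sub (hint (fun ξ => (m ^ 2 / 4 : ℝ) * u ξ ^ 2) (continuous_const.mul (hucont.pow 2)))
        (hint (fun ξ => Lambda * u ξ ^ (q + 1)) (continuous_const.mul (hup (q + 1)))),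
      integral_const_mul, integral_const_mul, hnorm, ← hS2def]
    ring
  by_cases hGint : Integrable (gradSq u) μ
  swap
  · -- degenerate case: the gradient term integral is 0 by definition
    rw [integral_undef hGint]
    have h1 : 0 ≤ ((m : ℝ) + 2) / m - q := by linarith
    have h2 : (0:ℝ) ≤ (m : ℝ) ^ 2 / 4 := by positivity
    have := mul_nonneg (mul_nonneg h2 h1) hS2nn
    simpa using this
  -- main case
  have hE1 : (∫ ξ, (gradSq u ξ + (m ^ 2 / 4 : ℝ) * u ξ ^ 2) ∂μ) = Lambda := by
    rw [integral_add hGint (hint (fun ξ => (m ^ 2 / 4 : ℝ) * u ξ ^ 2) (continuous_const.mul (hucont.pow 2))),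
      integral_const_mul, ← hS2def, hGu]
    ring
  -- coordinates of the moment-zero condition
  have hFint : Integrable (fun ξ : Sph m => u ξ ^ (q + 1) • (ξ : E)) μ := by
    apply Continuous.integrable_of_hasCompactSupport
      ((hup (q + 1)).smul continuous_subtype_val)
    exact IsCompact.of_isClosed_subset isCompact_univ (isClosed_tsupport _)
      (Set.subset_univ _)
  have hmomX : ∀ i, (∫ ξ, u ξ ^ (q + 1) * XF i ξ ∂μ) = 0 := by
    intro i
    have h := (Complex.reCLM.comp
      ((EuclideanSpace.proj i (𝕜 := ℂ)).restrictScalars ℝ)).integral_comp_comm hFint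
    rw [hmom] at h
    simpa [hXFdef] using h
  have hmomY : ∀ i, (∫ ξ, u ξ ^ (q + 1) * YF i ξ ∂μ) = 0 := by
    intro i
    have h := (Complex.imCLM.comp
      ((EuclideanSpace.proj i (𝕜 := ℂ)).restrictScalars ℝ)).integral_comp_comm hFint
    rw [hmom] at h
    simpa [hYFdef] using h
  -- the main second-variation consequence, for a generic coordinate multiplier φ
  have hmain : ∀ φ : Sph m → ℝ, Continuous φ →
      (∫ ξ, u ξ ^ (q + 1) * φ ξ ∂μ) = 0 → (∃ ξ₀, φ ξ₀ ≠ 0) →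
      Integrable (gradSq (fun ζ => u ζ * φ ζ)) μ ∧
      q * Lambda * (∫ ξ, u ξ ^ (q + 1) * φ ξ ^ 2 ∂μ) ≤
        (∫ ξ, gradSq (fun ζ => u ζ * φ ζ) ξ ∂μ) +
          (m ^ 2 / 4 : ℝ) * ∫ ξ, u ξ ^ 2 * φ ξ ^ 2 ∂μ := by
    rintro φ hφc hφmom ⟨ξ₀, hξ₀⟩
    have horth : (∫ ξ, u ξ ^ q * ((fun ζ => u ζ * φ ζ) ξ) ∂μ) = 0 := by
      have heq : (fun ξ : Sph m => u ξ ^ q * ((fun ζ => u ζ * φ ζ) ξ)) =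
          fun ξ => u ξ ^ (q + 1) * φ ξ := by
        funext ξ; simp only []; rw [hpow' ξ]; ring
      rw [heq]; exact hφmom
    have h := h2nd (fun ζ => u ζ * φ ζ) horth
    beta_reduce at h
    rw [hE1] at h
    have hA : (∫ ξ, u ξ ^ (q - 1) * (u ξ * φ ξ) ^ 2 ∂μ) =
        ∫ ξ, u ξ ^ (q + 1) * φ ξ ^ 2 ∂μ :=
      integral_congr_ae (Filter.Eventually.of_forall fun ξ => hpow ξ (φ ξ))
    rw [hA] at h
    have hf2c : Continuous (fun ξ : Sph m =>
        (m ^ 2 / 4 : ℝ) * (u ξ * φ ξ) ^ 2) :=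
      continuous_const.mul ((hucont.mul hφc).pow 2)
    by_cases hgi : Integrable (gradSq (fun ζ => u ζ * φ ζ)) μ
    · refine ⟨hgi, ?_⟩
      rw [integral_add hgi (hint _ hf2c), integral_const_mul] at h
      have heq2 : (∫ ξ, (u ξ * φ ξ) ^ 2 ∂μ) = ∫ ξ, u ξ ^ 2 * φ ξ ^ 2 ∂μ :=
        integral_congr_ae (Filter.Eventually.of_forall fun ξ => by ring)
      rw [heq2] at h
      exact h
    · exfalso
      have hB0 : (∫ ξ, (gradSq (fun ζ => u ζ * φ ζ) ξ +
          (m ^ 2 / 4 : ℝ) * (u ξ * φ ξ) ^ 2) ∂μ) = 0 := by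
        apply integral_undef
        intro hI
        apply hgi
        exact (hI.sub (hint _ hf2c)).congr
          (Filter.Eventually.of_forall fun ξ => by simp)
      rw [hB0] at h
      have hApos : 0 < ∫ ξ, u ξ ^ (q + 1) * φ ξ ^ 2 ∂μ := by
        apply hposint _ ((hup (q + 1)).mul (hφc.pow 2))
          (fun ξ => mul_nonneg (Real.rpow_nonneg (hu0 ξ).le _) (sq_nonneg _))
        exact ⟨ξ₀, mul_pos (Real.rpow_pos_of_pos (hu0 ξ₀) _)
          (lt_of_le_of_ne (sq_nonneg _) (Ne.symm (pow_ne_zero 2 hξ₀)))⟩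
      have hqpos : (0:ℝ) < q := by linarith
      have := mul_pos (mul_pos hqpos hLambda) hApos
      linarith
  -- points where the coordinates do not vanish
  have hXex : ∀ i : Fin (m + 1), ∃ ξ₀ : Sph m, XF i ξ₀ ≠ 0 := by
    intro i
    refine ⟨⟨EuclideanSpace.single i (1 : ℂ), ?_⟩, ?_⟩
    · rw [mem_sphere_zero_iff_norm, EuclideanSpace.norm_single]; simp
    · simp [hXFdef, EuclideanSpace.single_apply]
  have hYex : ∀ i : Fin (m + 1), ∃ ξ₀ : Sph m, YF i ξ₀ ≠ 0 := by
    intro i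
    refine ⟨⟨EuclideanSpace.single i (Complex.I), ?_⟩, ?_⟩
    · rw [mem_sphere_zero_iff_norm, EuclideanSpace.norm_single]; simp
    · simp [hYFdef, EuclideanSpace.single_apply]
  have hmX := fun i => hmain (XF i) (hXFc i) (hmomX i) (hXex i)
  have hmY := fun i => hmain (YF i) (hYFc i) (hmomY i) (hYex i)
  -- summing the coordinate contributions of a weight w
  have hsum1 : ∀ w : Sph m → ℝ, Continuous w →
      (∑ i, ((∫ ξ, w ξ * XF i ξ ^ 2 ∂μ) + ∫ ξ, w ξ * YF i ξ ^ 2 ∂μ)) =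
        ∫ ξ, w ξ ∂μ := by
    intro w hw
    have hXc : ∀ i, Continuous fun ξ : Sph m => w ξ * XF i ξ ^ 2 :=
      fun i => hw.mul ((hXFc i).pow 2)
    have hYc : ∀ i, Continuous fun ξ : Sph m => w ξ * YF i ξ ^ 2 :=
      fun i => hw.mul ((hYFc i).pow 2)
    calc (∑ i, ((∫ ξ, w ξ * XF i ξ ^ 2 ∂μ) + ∫ ξ, w ξ * YF i ξ ^ 2 ∂μ))
        = ∑ i, ∫ ξ, (w ξ * XF i ξ ^ 2 + w ξ * YF i ξ ^ 2) ∂μ :=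
          Finset.sum_congr rfl fun i _ =>
            (integral_add (hint _ (hXc i)) (hint _ (hYc i))).symm
      _ = ∫ ξ, (∑ i, (w ξ * XF i ξ ^ 2 + w ξ * YF i ξ ^ 2)) ∂μ :=
          (integral_finset_sum _ fun i _ => hint _ ((hXc i).add (hYc i))).symm
      _ = ∫ ξ, w ξ ∂μ := by
          apply integral_congr_ae
          apply Filter.Eventually.of_forall
          intro ξ
          calc (∑ i, (w ξ * XF i ξ ^ 2 + w ξ * YF i ξ ^ 2))
              = w ξ * ∑ i, (XF i ξ ^ 2 + YF i ξ ^ 2) := by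
                rw [Finset.mul_sum]
                exact Finset.sum_congr rfl fun i _ => by ring
            _ = w ξ := by rw [hsph ξ, mul_one]
  -- sum of the A-terms is 1
  have hsumA : (∑ i, ((∫ ξ, u ξ ^ (q + 1) * XF i ξ ^ 2 ∂μ) +
      ∫ ξ, u ξ ^ (q + 1) * YF i ξ ^ 2 ∂μ)) = 1 := by
    have := hsum1 (fun ξ => u ξ ^ (q + 1)) (hup (q + 1))
    beta_reduce at this
    rw [this]
    exact hnorm
  -- sum of the P-terms is S2
  have hsumP : (∑ i, ((∫ ξ, u ξ ^ 2 * XF i ξ ^ 2 ∂μ) +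
      ∫ ξ, u ξ ^ 2 * YF i ξ ^ 2 ∂μ)) = S2 := by
    have := hsum1 (fun ξ => u ξ ^ 2) (hucont.pow 2)
    beta_reduce at this
    rw [this, hS2def]
  -- sum of gradient terms via the coordinate integration-by-parts identity
  have hsumG : (∑ i, ((∫ ξ, gradSq (fun ζ => u ζ * XF i ζ) ξ ∂μ) +
      ∫ ξ, gradSq (fun ζ => u ζ * YF i ζ) ξ ∂μ)) =
      (∫ ξ, gradSq u ξ ∂μ) + ((m : ℝ) / 2) * S2 := by
    calc (∑ i, ((∫ ξ, gradSq (fun ζ => u ζ * XF i ζ) ξ ∂μ) +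
        ∫ ξ, gradSq (fun ζ => u ζ * YF i ζ) ξ ∂μ))
        = ∑ i, ∫ ξ, (gradSq (fun ζ => u ζ * XF i ζ) ξ +
            gradSq (fun ζ => u ζ * YF i ζ) ξ) ∂μ :=
          Finset.sum_congr rfl fun i _ =>
            (integral_add (hmX i).1 (hmY i).1).symm
      _ = ∫ ξ, (∑ i, (gradSq (fun ζ => u ζ * XF i ζ) ξ +
            gradSq (fun ζ => u ζ * YF i ζ) ξ)) ∂μ :=
          (integral_finset_sum _ fun i _ => (hmX i).1.add (hmY i).1).symm
      _ = ∫ ξ, (gradSq u ξ + ((m : ℝ) / 2) * u ξ ^ 2) ∂μ := by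
          simp only [hXFdef, hYFdef]
          exact hcoord u
      _ = (∫ ξ, gradSq u ξ ∂μ) + ((m : ℝ) / 2) * S2 := by
          rw [integral_add hGint (hint (fun ξ => ((m : ℝ) / 2) * u ξ ^ 2) (continuous_const.mul (hucont.pow 2))),
            integral_const_mul, ← hS2def]
  -- summed second-variation inequality
  have hsumineq :
      (∑ i, (q * Lambda * ((∫ ξ, u ξ ^ (q + 1) * XF i ξ ^ 2 ∂μ) +
        ∫ ξ, u ξ ^ (q + 1) * YF i ξ ^ 2 ∂μ))) ≤
      ∑ i, (((∫ ξ, gradSq (fun ζ => u ζ * XF i ζ) ξ ∂μ) +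
          ∫ ξ, gradSq (fun ζ => u ζ * YF i ζ) ξ ∂μ) +
        (m ^ 2 / 4 : ℝ) * ((∫ ξ, u ξ ^ 2 * XF i ξ ^ 2 ∂μ) +
          ∫ ξ, u ξ ^ 2 * YF i ξ ^ 2 ∂μ)) := by
    apply Finset.sum_le_sum
    intro i _
    have h1 := (hmX i).2
    have h2 := (hmY i).2
    nlinarith [h1, h2]
  rw [← Finset.mul_sum, hsumA, mul_one] at hsumineq
  have hsplit : (∑ i, (((∫ ξ, gradSq (fun ζ => u ζ * XF i ζ) ξ ∂μ) +
          ∫ ξ, gradSq (fun ζ => u ζ * YF i ζ) ξ ∂μ) +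
        (m ^ 2 / 4 : ℝ) * ((∫ ξ, u ξ ^ 2 * XF i ξ ^ 2 ∂μ) +
          ∫ ξ, u ξ ^ 2 * YF i ξ ^ 2 ∂μ))) =
      ((∫ ξ, gradSq u ξ ∂μ) + ((m : ℝ) / 2) * S2) + (m ^ 2 / 4 : ℝ) * S2 := by
    rw [Finset.sum_add_distrib, hsumG, ← Finset.mul_sum, hsumP]
  rw [hsplit, hGu] at hsumineq
  -- conclude
  have hkey : (q - 1) * Lambda ≤ ((m : ℝ) / 2) * S2 := by nlinarith [hsumineq]
  rw [hGu]
  have hcoef : (m ^ 2 / 4 : ℝ) * (((m : ℝ) + 2) / m - q) =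
      (m : ℝ) / 2 + (m : ℝ) ^ 2 / 4 - q * ((m : ℝ) ^ 2 / 4) := by
    field_simp
    ring
  rw [hcoef]
  nlinarith [hkey]
end
end

section
/- Let $0<\lambda<Q=2m+2$ and $p>\frac{2Q}{2Q-\lambda}$, and suppose $u>0$ satisfies $I_\lambda(u)=u^{p-1}$, the second-variation inequality $\langle I_\lambda f,f\rangle\le (p-1)\int u^{p-2}f^2 d\sigma$ for all real $f$ with $\int u^{p-1}f\,d\sigma=0$, and the moment condition $\int u^p\xi\,d\sigma(\xi)=0$. Then $\int\int\frac{\operatorname{Re}(\xi\cdot\overline{\eta})}{|1-\xi\cdot\overline{\eta}|^{\lambda/2}}u(\xi)u(\eta)\,d\sigma(\xi)d\sigma(\eta)\le(p-1)\int_{\mathbb{S}^{2m+1}}u^p\,d\sigma$. -/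
noncomputable section
open MeasureTheory Real

/-- The operator `I_λ f(ξ) = ∫ f(η) |1-ξ·η̄|^{-λ/2} dσ(η)`. -/
def Ilam (m : ℕ) (lam : ℝ) (f : Sph m → ℝ) (ξ : Sph m) : ℝ :=
  ∫ η : Sph m, f η / ‖(1 : ℂ) - hdot (ξ : EuclideanSpace ℂ (Fin (m + 1))) η‖ ^ (lam / 2)
    ∂(sphMeasure m)

/-- `L^p` norm (as a real number) with respect to the sphere measure. -/
def spNorm (m : ℕ) (p : ℝ) (f : Sph m → ℝ) : ℝ :=
  (eLpNorm f (ENNReal.ofReal p) (sphMeasure m)).toReal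

namespace DIB

variable {m : ℕ}

/-- kernel -/
def ker (m : ℕ) (lam : ℝ) (ξ η : Sph m) : ℝ :=
  ‖(1 : ℂ) - hdot (ξ : EuclideanSpace ℂ (Fin (m + 1))) η‖ ^ (lam / 2)

instance : Measure.IsAddHaarMeasure (volume : Measure (EuclideanSpace ℂ (Fin (m + 1)))) :=
  isAddHaarMeasure_basis_addHaar _

instance : IsFiniteMeasure (sphMeasure m) := by
  unfold sphMeasure; infer_instance

lemma hdot_inner (ξ η : EuclideanSpace ℂ (Fin (m + 1))) :
    hdot ξ η = (inner ℂ η ξ : ℂ) := by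
  simp [hdot, PiLp.inner_apply, RCLike.inner_apply, mul_comm]

lemma sph_norm (ξ : Sph m) : ‖(ξ : EuclideanSpace ℂ (Fin (m + 1)))‖ = 1 :=
  mem_sphere_zero_iff_norm.mp ξ.2

lemma norm_hdot_le_one (ξ η : Sph m) :
    ‖hdot (ξ : EuclideanSpace ℂ (Fin (m + 1))) η‖ ≤ 1 := by
  rw [hdot_inner]
  calc ‖(inner ℂ (η : EuclideanSpace ℂ (Fin (m + 1))) (ξ : EuclideanSpace ℂ (Fin (m + 1))) : ℂ)‖
      ≤ ‖(η : EuclideanSpace ℂ (Fin (m + 1)))‖ * ‖(ξ : EuclideanSpace ℂ (Fin (m + 1)))‖ :=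
        norm_inner_le_norm _ _
    _ = 1 := by rw [sph_norm, sph_norm, one_mul]

lemma re_hdot_le_one (ξ η : Sph m) :
    (hdot (ξ : EuclideanSpace ℂ (Fin (m + 1))) η).re ≤ 1 := by
  have h := norm_hdot_le_one ξ η
  have h2 := Complex.abs_re_le_norm (hdot (ξ : EuclideanSpace ℂ (Fin (m + 1))) η)
  linarith [le_abs_self (hdot (ξ : EuclideanSpace ℂ (Fin (m + 1))) η).re]

lemma one_sub_re_hdot_le (ξ η : Sph m) :
    1 - (hdot (ξ : EuclideanSpace ℂ (Fin (m + 1))) η).re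
      ≤ ‖(1 : ℂ) - hdot (ξ : EuclideanSpace ℂ (Fin (m + 1))) η‖ := by
  have h2 := Complex.abs_re_le_norm ((1 : ℂ) - hdot (ξ : EuclideanSpace ℂ (Fin (m + 1))) η)
  have : ((1 : ℂ) - hdot (ξ : EuclideanSpace ℂ (Fin (m + 1))) η).re
      = 1 - (hdot (ξ : EuclideanSpace ℂ (Fin (m + 1))) η).re := by simp
  rw [this] at h2
  exact le_trans (le_abs_self _) h2

lemma norm_one_sub_hdot_le_two (ξ η : Sph m) :
    ‖(1 : ℂ) - hdot (ξ : EuclideanSpace ℂ (Fin (m + 1))) η‖ ≤ 2 := by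
  calc ‖(1 : ℂ) - hdot (ξ : EuclideanSpace ℂ (Fin (m + 1))) η‖
      ≤ ‖(1 : ℂ)‖ + ‖hdot (ξ : EuclideanSpace ℂ (Fin (m + 1))) η‖ := norm_sub_le _ _
    _ ≤ 1 + 1 := by simpa using norm_hdot_le_one ξ η
    _ = 2 := by norm_num

lemma hdot_eq_one_iff (ξ η : Sph m) :
    hdot (ξ : EuclideanSpace ℂ (Fin (m + 1))) η = 1 ↔ η = ξ := by
  rw [hdot_inner, inner_eq_one_iff_of_norm_eq_one (sph_norm η) (sph_norm ξ)]
  exact ⟨fun h => Subtype.ext h, fun h => congrArg _ h⟩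

lemma ker_nonneg (lam : ℝ) (ξ η : Sph m) : 0 ≤ ker m lam ξ η :=
  Real.rpow_nonneg (norm_nonneg _) _

lemma ker_le {lam : ℝ} (hlam : 0 ≤ lam) (ξ η : Sph m) : ker m lam ξ η ≤ 2 ^ (lam / 2) :=
  Real.rpow_le_rpow (norm_nonneg _) (norm_one_sub_hdot_le_two ξ η) (by linarith)

lemma ker_pos {lam : ℝ} (hlam : 0 < lam) {ξ η : Sph m} (h : η ≠ ξ) : 0 < ker m lam ξ η := by
  apply Real.rpow_pos_of_pos
  rw [norm_pos_iff, sub_ne_zero]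
  exact fun hc => h ((hdot_eq_one_iff ξ η).mp hc.symm)

lemma ker_self {lam : ℝ} (hlam : 0 < lam) (ξ : Sph m) : ker m lam ξ ξ = 0 := by
  have h : hdot (ξ : EuclideanSpace ℂ (Fin (m + 1))) ξ = 1 := (hdot_eq_one_iff ξ ξ).mpr rfl
  simp [ker, h, Real.zero_rpow (by positivity : lam / 2 ≠ 0)]

lemma ker_cont {lam : ℝ} (hlam : 0 ≤ lam) (ξ : Sph m) :
    Continuous fun η : Sph m => ker m lam ξ η := by
  unfold ker
  simp only [hdot_inner]
  exact ((continuous_const.sub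
    (continuous_subtype_val.inner continuous_const)).norm).rpow_const
      fun x => Or.inr (by linarith)

lemma ker_cont2 {lam : ℝ} (hlam : 0 ≤ lam) :
    Continuous fun q : Sph m × Sph m => ker m lam q.1 q.2 := by
  unfold ker
  simp only [hdot_inner]
  exact ((continuous_const.sub
    ((continuous_subtype_val.comp continuous_snd).inner
      (continuous_subtype_val.comp continuous_fst))).norm).rpow_const
      fun x => Or.inr (by linarith)

lemma msingleton (x : Sph m) : MeasurableSet ({x} : Set (Sph m)) := by
  have h : ({x} : Set (Sph m)) = Subtype.val ⁻¹' {(x : EuclideanSpace ℂ (Fin (m + 1)))} := by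
    ext y; simp [Subtype.ext_iff]
  rw [h]
  exact measurable_subtype_coe (measurableSet_singleton _)

section WithU

variable {lam p : ℝ} {u : Sph m → ℝ}

/-- From the Euler–Lagrange equation: the kernel integrand is integrable for every pole. -/
lemma integrable_ker_u (hu0 : ∀ ξ, 0 < u ξ) (hEL : ∀ ξ, Ilam m lam u ξ = u ξ ^ (p - 1))
    (ξ : Sph m) : Integrable (fun η => u η / ker m lam ξ η) (sphMeasure m) := by
  by_contra hcon
  have h0 : Ilam m lam u ξ = 0 := integral_undef hcon
  have h1 := hEL ξ
  rw [h0] at h1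
  exact absurd h1.symm (ne_of_gt (Real.rpow_pos_of_pos (hu0 ξ) _))

/-- distinguished points on the sphere -/
def pt (i : Fin (m + 1)) : Sph m :=
  ⟨EuclideanSpace.single i 1, mem_sphere_zero_iff_norm.mpr (by simp)⟩

lemma pt_ne {i j : Fin (m + 1)} (h : i ≠ j) : pt i ≠ pt (m := m) j := by
  intro hc
  have h2 := congrArg (fun x : Sph m => (x : EuclideanSpace ℂ (Fin (m + 1))) i) hc
  simp only [pt, EuclideanSpace.single_apply] at h2
  simp [h] at h2

lemma aesm_u (hlam : 0 < lam) (hu0 : ∀ ξ, 0 < u ξ)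
    (hEL : ∀ ξ, Ilam m lam u ξ = u ξ ^ (p - 1)) :
    AEStronglyMeasurable u (sphMeasure m) := by
  set ξ₀ : Sph m := pt 0
  have hg := (integrable_ker_u hu0 hEL ξ₀).aestronglyMeasurable
  have hrep : u = fun η => (u η / ker m lam ξ₀ η) * ker m lam ξ₀ η
      + Set.indicator {ξ₀} (fun _ => u ξ₀) η := by
    funext η
    by_cases hη : η = ξ₀
    · subst hη
      rw [ker_self hlam, mul_zero, zero_add]
      simp
    · rw [div_mul_cancel₀ _ (ne_of_gt (ker_pos hlam hη)),
        Set.indicator_of_notMem (by simpa using hη), add_zero]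
  rw [hrep]
  exact (hg.mul (ker_cont hlam.le ξ₀).aestronglyMeasurable).add
    ((stronglyMeasurable_const.indicator (msingleton ξ₀)).aestronglyMeasurable)

lemma u_le_aux (hlam : 0 < lam) (hu0 : ∀ ξ, 0 < u ξ) {ξ η : Sph m} (h : η ≠ ξ) :
    u η ≤ 2 ^ (lam / 2) * (u η / ker m lam ξ η) := by
  have hk := ker_pos hlam h
  have hle := ker_le hlam.le ξ η
  have h1 : u η / 2 ^ (lam / 2) ≤ u η / ker m lam ξ η :=
    div_le_div_of_nonneg_left (hu0 η).le hk hle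
  have h2 : (0:ℝ) < 2 ^ (lam / 2) := Real.rpow_pos_of_pos (by norm_num) _
  calc u η = 2 ^ (lam / 2) * (u η / 2 ^ (lam / 2)) := by field_simp
    _ ≤ 2 ^ (lam / 2) * (u η / ker m lam ξ η) := by
        exact mul_le_mul_of_nonneg_left h1 h2.le

lemma integrable_u (hm : 1 ≤ m) (hlam : 0 < lam) (hu0 : ∀ ξ, 0 < u ξ)
    (hEL : ∀ ξ, Ilam m lam u ξ = u ξ ^ (p - 1)) :
    Integrable u (sphMeasure m) := by
  have hi1 : (1 : Fin (m + 1)) ≠ 0 := by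
    have : (1 : ℕ) < m + 1 := by omega
    simp [Fin.ext_iff, Fin.val_one', Nat.mod_eq_of_lt this]
  have h0 := integrable_ker_u hu0 hEL (pt 0)
  have h1 := integrable_ker_u hu0 hEL (pt 1)
  refine Integrable.mono' (((h0.add h1).const_mul (2 ^ (lam / 2))))
    (aesm_u hlam hu0 hEL) (Filter.Eventually.of_forall fun η => ?_)
  rw [Real.norm_of_nonneg (hu0 η).le]
  by_cases hη : η = pt 0
  · subst hη
    have hne : (pt 0 : Sph m) ≠ pt 1 := pt_ne (by simpa using hi1.symm)
    have := u_le_aux hlam hu0 hne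
    have hpos : 0 ≤ u (pt 0 : Sph m) / ker m lam (pt 0) (pt 0) :=
      div_nonneg (hu0 _).le (ker_nonneg _ _ _)
    calc u (pt 0 : Sph m) ≤ 2 ^ (lam / 2) * (u (pt 0) / ker m lam (pt 1) (pt 0)) := this
      _ ≤ 2 ^ (lam / 2) * (u (pt 0) / ker m lam (pt 0) (pt 0)
            + u (pt 0) / ker m lam (pt 1) (pt 0)) := by
          apply mul_le_mul_of_nonneg_left _ (Real.rpow_pos_of_pos (by norm_num) _).le
          linarith
  · have := u_le_aux hlam hu0 hη
    have hpos : 0 ≤ u η / ker m lam (pt 1) η := div_nonneg (hu0 _).le (ker_nonneg _ _ _)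
    calc u η ≤ 2 ^ (lam / 2) * (u η / ker m lam (pt 0) η) := this
      _ ≤ 2 ^ (lam / 2) * (u η / ker m lam (pt 0) η + u η / ker m lam (pt 1) η) := by
          apply mul_le_mul_of_nonneg_left _ (Real.rpow_pos_of_pos (by norm_num) _).le
          linarith

end WithU

/-- real coordinate functions indexed by `Fin (m+1) × Bool` -/
def cf (j : Fin (m + 1) × Bool) (ξ : Sph m) : ℝ :=
  if j.2 then ((ξ : EuclideanSpace ℂ (Fin (m + 1))) j.1).re
  else ((ξ : EuclideanSpace ℂ (Fin (m + 1))) j.1).im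

lemma coord_cont (i : Fin (m + 1)) :
    Continuous fun ξ : Sph m => (ξ : EuclideanSpace ℂ (Fin (m + 1))) i := by
  have h : Continuous fun x : EuclideanSpace ℂ (Fin (m + 1)) => x i :=
    (continuous_apply i).comp (PiLp.continuousLinearEquiv 2 ℂ _).continuous
  exact h.comp continuous_subtype_val

lemma cf_cont (j : Fin (m + 1) × Bool) : Continuous (cf (m := m) j) := by
  unfold cf
  by_cases hb : j.2
  · simp only [hb, if_true]
    exact Complex.continuous_re.comp (coord_cont j.1)
  · simp only [hb, if_false]
    exact Complex.continuous_im.comp (coord_cont j.1)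

lemma sum_normsq_coord (ξ : Sph m) :
    ∑ i, ‖(ξ : EuclideanSpace ℂ (Fin (m + 1))) i‖ ^ 2 = 1 := by
  have h := sph_norm ξ
  rw [EuclideanSpace.norm_eq] at h
  have h2 : (0:ℝ) ≤ ∑ i, ‖(ξ : EuclideanSpace ℂ (Fin (m + 1))) i‖ ^ 2 :=
    Finset.sum_nonneg fun i _ => sq_nonneg _
  nlinarith [Real.sq_sqrt h2, Real.sqrt_nonneg (∑ i, ‖(ξ : EuclideanSpace ℂ (Fin (m + 1))) i‖ ^ 2)]

lemma cf_sum_sq (ξ : Sph m) : ∑ j : Fin (m + 1) × Bool, cf j ξ ^ 2 = 1 := by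
  rw [Fintype.sum_prod_type]
  have h : ∀ i : Fin (m + 1), ∑ b : Bool, cf (i, b) ξ ^ 2
      = ‖(ξ : EuclideanSpace ℂ (Fin (m + 1))) i‖ ^ 2 := by
    intro i
    rw [Fintype.sum_bool]
    simp only [cf, Bool.false_eq_true, if_true, if_false]
    rw [Complex.sq_norm, Complex.normSq_apply]
    ring
  rw [Finset.sum_congr rfl fun i _ => h i, sum_normsq_coord]

lemma cf_mul_sum (ξ η : Sph m) :
    ∑ j : Fin (m + 1) × Bool, cf j ξ * cf j η
      = (hdot (ξ : EuclideanSpace ℂ (Fin (m + 1))) η).re := by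
  rw [Fintype.sum_prod_type]
  unfold hdot
  rw [Complex.re_sum]
  refine Finset.sum_congr rfl fun i _ => ?_
  rw [Fintype.sum_bool]
  simp only [cf, Bool.false_eq_true, if_true, if_false, Complex.mul_re, Complex.conj_re, Complex.conj_im]
  ring

lemma abs_cf_le_one (j : Fin (m + 1) × Bool) (ξ : Sph m) : |cf j ξ| ≤ 1 := by
  have h1 : ‖(ξ : EuclideanSpace ℂ (Fin (m + 1))) j.1‖ ^ 2 ≤ 1 := by
    rw [← sum_normsq_coord ξ]
    exact Finset.single_le_sum (f := fun i => ‖(ξ : EuclideanSpace ℂ (Fin (m + 1))) i‖ ^ 2)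
      (fun i _ => sq_nonneg _) (Finset.mem_univ j.1)
  have h2 : ‖(ξ : EuclideanSpace ℂ (Fin (m + 1))) j.1‖ ≤ 1 := by
    nlinarith [norm_nonneg ((ξ : EuclideanSpace ℂ (Fin (m + 1))) j.1)]
  have h3 : |cf j ξ| ≤ ‖(ξ : EuclideanSpace ℂ (Fin (m + 1))) j.1‖ := by
    unfold cf
    by_cases hb : j.2
    · simp only [hb, if_true]
      exact Complex.abs_re_le_norm _
    · simp only [hb, if_false]
      exact Complex.abs_im_le_norm _
  exact h3.trans h2

section Main

variable {lam p : ℝ} {u : Sph m → ℝ}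

lemma Ilam_eq (f : Sph m → ℝ) (ξ : Sph m) :
    Ilam m lam f ξ = ∫ η : Sph m, f η / ker m lam ξ η ∂(sphMeasure m) := rfl

lemma integrable_mul_ker (hu0 : ∀ ξ, 0 < u ξ) (hEL : ∀ ξ, Ilam m lam u ξ = u ξ ^ (p - 1))
    (ξ : Sph m) {c : Sph m → ℝ} (hc : Continuous c) (C : ℝ) (hb : ∀ η, |c η| ≤ C) :
    Integrable (fun η => c η * (u η / ker m lam ξ η)) (sphMeasure m) :=
  (integrable_ker_u hu0 hEL ξ).bdd_mul (c := C) hc.aestronglyMeasurable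
    (Filter.Eventually.of_forall fun η => by simpa [Real.norm_eq_abs] using hb η)

lemma rpow_split1 (hu0 : ∀ ξ, 0 < u ξ) (ξ : Sph m) : u ξ ^ p = u ξ * u ξ ^ (p - 1) := by
  rw [show p = 1 + (p - 1) by ring, Real.rpow_add (hu0 ξ), Real.rpow_one]
  ring_nf

lemma onesub_ptwise (hlam : 0 < lam) (hu0 : ∀ ξ, 0 < u ξ) (ξ η : Sph m) :
    (1 - (hdot (ξ : EuclideanSpace ℂ (Fin (m + 1))) η).re) * (u η / ker m lam ξ η)
      ≤ (1/2) * (u η / ker m lam ξ η) + (2 * 2 ^ (lam / 2)) * u η := by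
  set t := ‖(1 : ℂ) - hdot (ξ : EuclideanSpace ℂ (Fin (m + 1))) η‖ with ht
  have hr0 : 0 ≤ 1 - (hdot (ξ : EuclideanSpace ℂ (Fin (m + 1))) η).re := by
    linarith [re_hdot_le_one ξ η]
  have hrt : 1 - (hdot (ξ : EuclideanSpace ℂ (Fin (m + 1))) η).re ≤ t := one_sub_re_hdot_le ξ η
  have ht2 : t ≤ 2 := norm_one_sub_hdot_le_two ξ η
  have ht0 : 0 ≤ t := norm_nonneg _
  have hK : ker m lam ξ η = t ^ (lam / 2) := rfl
  have hKnn : 0 ≤ ker m lam ξ η := ker_nonneg _ _ _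
  have hdiv0 : 0 ≤ u η / ker m lam ξ η := div_nonneg (hu0 η).le hKnn
  have hpow2 : (0:ℝ) < 2 ^ (lam / 2) := Real.rpow_pos_of_pos (by norm_num) _
  by_cases hcase : t ≤ 1/2
  · have hr : 1 - (hdot (ξ : EuclideanSpace ℂ (Fin (m + 1))) η).re ≤ 1/2 := hrt.trans hcase
    have h1 : (1 - (hdot (ξ : EuclideanSpace ℂ (Fin (m + 1))) η).re) * (u η / ker m lam ξ η)
        ≤ (1/2) * (u η / ker m lam ξ η) := mul_le_mul_of_nonneg_right hr hdiv0
    have h2 : 0 ≤ (2 * 2 ^ (lam / 2)) * u η := mul_nonneg (by positivity) (hu0 η).le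
    linarith
  · push_neg at hcase
    have hKpos : (0:ℝ) < (1/2 : ℝ) ^ (lam / 2) := Real.rpow_pos_of_pos (by norm_num) _
    have hKge : (1/2 : ℝ) ^ (lam / 2) ≤ ker m lam ξ η := by
      rw [hK]
      exact Real.rpow_le_rpow (by norm_num) hcase.le (by linarith)
    have hhalf : ((1/2 : ℝ) ^ (lam / 2)) = (2 ^ (lam / 2) : ℝ)⁻¹ := by
      rw [one_div, Real.inv_rpow (by norm_num : (0:ℝ) ≤ 2)]
    have hdivle : u η / ker m lam ξ η ≤ 2 ^ (lam / 2) * u η := by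
      have h1 : u η / ker m lam ξ η ≤ u η / ((1/2 : ℝ) ^ (lam / 2)) :=
        div_le_div_of_nonneg_left (hu0 η).le hKpos hKge
      rw [hhalf] at h1
      have h2 : u η / ((2:ℝ) ^ (lam / 2))⁻¹ = 2 ^ (lam / 2) * u η := by
        field_simp
      linarith [h1, h2]
    have h2 : (1 - (hdot (ξ : EuclideanSpace ℂ (Fin (m + 1))) η).re) * (u η / ker m lam ξ η)
        ≤ 2 * (u η / ker m lam ξ η) := by
      apply mul_le_mul_of_nonneg_right _ hdiv0
      linarith
    have h3 : 0 ≤ (1/2 : ℝ) * (u η / ker m lam ξ η) := mul_nonneg (by norm_num) hdiv0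
    calc (1 - (hdot (ξ : EuclideanSpace ℂ (Fin (m + 1))) η).re) * (u η / ker m lam ξ η)
        ≤ 2 * (u η / ker m lam ξ η) := h2
      _ ≤ 2 * (2 ^ (lam / 2) * u η) := by
          apply mul_le_mul_of_nonneg_left hdivle (by norm_num)
      _ = (2 * 2 ^ (lam / 2)) * u η := by ring
      _ ≤ (1/2) * (u η / ker m lam ξ η) + (2 * 2 ^ (lam / 2)) * u η := by linarith

lemma onesub_cont (hlam : 0 ≤ lam) (ξ : Sph m) :
    Continuous fun η : Sph m =>
      1 - (hdot (ξ : EuclideanSpace ℂ (Fin (m + 1))) η).re := by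
  simp only [hdot_inner]
  exact continuous_const.sub
    (Complex.continuous_re.comp (continuous_subtype_val.inner continuous_const))

lemma onesub_bound (ξ η : Sph m) :
    |1 - (hdot (ξ : EuclideanSpace ℂ (Fin (m + 1))) η).re| ≤ 2 := by
  have h1 := re_hdot_le_one ξ η
  have h2 := (one_sub_re_hdot_le ξ η).trans (norm_one_sub_hdot_le_two ξ η)
  rw [abs_le]
  constructor <;> linarith

lemma G_le (hlam : 0 < lam) (hu0 : ∀ ξ, 0 < u ξ)
    (hEL : ∀ ξ, Ilam m lam u ξ = u ξ ^ (p - 1)) (hintu : Integrable u (sphMeasure m))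
    (ξ : Sph m) :
    (∫ η : Sph m, (1 - (hdot (ξ : EuclideanSpace ℂ (Fin (m + 1))) η).re)
        * (u η / ker m lam ξ η) ∂(sphMeasure m))
      ≤ (1/2) * u ξ ^ (p - 1) + (2 * 2 ^ (lam / 2)) * ∫ η : Sph m, u η ∂(sphMeasure m) := by
  have hint1 := integrable_mul_ker hu0 hEL ξ (onesub_cont hlam.le ξ) 2 (onesub_bound ξ)
  have hint2 : Integrable (fun η : Sph m => (1/2) * (u η / ker m lam ξ η)
      + (2 * 2 ^ (lam / 2)) * u η) (sphMeasure m) :=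
    ((integrable_ker_u hu0 hEL ξ).const_mul _).add (hintu.const_mul _)
  have h := integral_mono hint1 hint2 (fun η => onesub_ptwise hlam hu0 ξ η)
  rw [integral_add ((integrable_ker_u hu0 hEL ξ).const_mul _) (hintu.const_mul _),
    integral_const_mul, integral_const_mul, ← Ilam_eq, hEL ξ] at h
  exact h

lemma T_eq (hlam : 0 < lam) (hu0 : ∀ ξ, 0 < u ξ)
    (hEL : ∀ ξ, Ilam m lam u ξ = u ξ ^ (p - 1)) (ξ : Sph m) :
    (∫ η : Sph m, (hdot (ξ : EuclideanSpace ℂ (Fin (m + 1))) η).re * u ξ * u η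
        / ker m lam ξ η ∂(sphMeasure m))
      = u ξ ^ p - u ξ * ∫ η : Sph m, (1 - (hdot (ξ : EuclideanSpace ℂ (Fin (m + 1))) η).re)
          * (u η / ker m lam ξ η) ∂(sphMeasure m) := by
  have hptwise : ∀ η : Sph m, (hdot (ξ : EuclideanSpace ℂ (Fin (m + 1))) η).re * u ξ * u η
      / ker m lam ξ η
      = u ξ * (u η / ker m lam ξ η)
        - u ξ * ((1 - (hdot (ξ : EuclideanSpace ℂ (Fin (m + 1))) η).re)
          * (u η / ker m lam ξ η)) := by
    intro η
    rw [mul_div_assoc]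
    ring
  rw [integral_congr_ae (Filter.Eventually.of_forall hptwise),
    integral_sub ((integrable_ker_u hu0 hEL ξ).const_mul _)
      ((integrable_mul_ker hu0 hEL ξ (onesub_cont hlam.le ξ) 2 (onesub_bound ξ)).const_mul _),
    integral_const_mul, integral_const_mul, ← Ilam_eq, hEL ξ, ← rpow_split1 hu0 ξ]

lemma case2 (hm : 1 ≤ m) (hlam : 0 < lam) (hp1 : 1 < p) (hu0 : ∀ ξ, 0 < u ξ)
    (hEL : ∀ ξ, Ilam m lam u ξ = u ξ ^ (p - 1))
    (h_nonint : ¬ Integrable (fun ξ => u ξ ^ p) (sphMeasure m)) :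
    (∫ ξ : Sph m, ∫ η : Sph m,
        (hdot (ξ : EuclideanSpace ℂ (Fin (m + 1))) η).re * u ξ * u η
          / ker m lam ξ η ∂(sphMeasure m) ∂(sphMeasure m))
      ≤ (p - 1) * ∫ ξ : Sph m, u ξ ^ p ∂(sphMeasure m) := by
  have hintu := integrable_u hm hlam hu0 hEL
  set M : ℝ := ∫ η : Sph m, u η ∂(sphMeasure m) with hM
  have key : ∀ ξ : Sph m, u ξ ^ p
      ≤ 2 * (∫ η : Sph m, (hdot (ξ : EuclideanSpace ℂ (Fin (m + 1))) η).re * u ξ * u η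
          / ker m lam ξ η ∂(sphMeasure m)) + (2 * (2 * 2 ^ (lam / 2)) * M) * u ξ := by
    intro ξ
    have hTeq := T_eq hlam hu0 hEL ξ
    have hGle := G_le hlam hu0 hEL hintu ξ
    have hmul : u ξ * (∫ η : Sph m, (1 - (hdot (ξ : EuclideanSpace ℂ (Fin (m + 1))) η).re)
          * (u η / ker m lam ξ η) ∂(sphMeasure m))
        ≤ u ξ * ((1/2) * u ξ ^ (p - 1) + (2 * 2 ^ (lam / 2)) * M) :=
      mul_le_mul_of_nonneg_left hGle (hu0 ξ).le
    have hsplit := rpow_split1 (p := p) hu0 ξ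
    have hmul2 : u ξ * ((1/2) * u ξ ^ (p - 1) + (2 * 2 ^ (lam / 2)) * M)
        = (1/2) * u ξ ^ p + (2 * 2 ^ (lam / 2)) * M * u ξ := by
      rw [hsplit]; ring
    linarith [hmul, hTeq]
  have hT : ¬ Integrable (fun ξ : Sph m => ∫ η : Sph m,
      (hdot (ξ : EuclideanSpace ℂ (Fin (m + 1))) η).re * u ξ * u η
        / ker m lam ξ η ∂(sphMeasure m)) (sphMeasure m) := by
    intro hT
    apply h_nonint
    refine Integrable.mono' ((hT.const_mul 2).add
      (hintu.const_mul (2 * (2 * 2 ^ (lam / 2)) * M)))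
      ?_ (Filter.Eventually.of_forall fun ξ => ?_)
    · exact ((aesm_u hlam hu0 hEL).aemeasurable.pow aemeasurable_const).aestronglyMeasurable
    · rw [Real.norm_of_nonneg (Real.rpow_nonneg (hu0 ξ).le _)]
      exact key ξ
  rw [integral_undef hT]
  exact mul_nonneg (by linarith) (integral_nonneg fun ξ => Real.rpow_nonneg (hu0 ξ).le _)

lemma ker_def (ξ η : Sph m) :
    ‖(1 : ℂ) - hdot (ξ : EuclideanSpace ℂ (Fin (m + 1))) η‖ ^ (lam / 2) = ker m lam ξ η := rfl

lemma aesm_up (hlam : 0 < lam) (hu0 : ∀ ξ, 0 < u ξ)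
    (hEL : ∀ ξ, Ilam m lam u ξ = u ξ ^ (p - 1)) (q : ℝ) :
    AEStronglyMeasurable (fun ξ => u ξ ^ q) (sphMeasure m) :=
  ((aesm_u hlam hu0 hEL).aemeasurable.pow aemeasurable_const).aestronglyMeasurable

lemma integrable_vec (hlam : 0 < lam) (hu0 : ∀ ξ, 0 < u ξ)
    (hEL : ∀ ξ, Ilam m lam u ξ = u ξ ^ (p - 1))
    (hintp : Integrable (fun ξ => u ξ ^ p) (sphMeasure m)) :
    Integrable (fun ξ : Sph m => u ξ ^ p • (ξ : EuclideanSpace ℂ (Fin (m + 1))))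
      (sphMeasure m) := by
  refine Integrable.mono' hintp
    ((aesm_up hlam hu0 hEL p).smul continuous_subtype_val.aestronglyMeasurable)
    (Filter.Eventually.of_forall fun ξ => ?_)
  rw [norm_smul, sph_norm, mul_one, Real.norm_of_nonneg (Real.rpow_nonneg (hu0 ξ).le _)]

/-- the coordinate continuous linear functionals -/
def cl (j : Fin (m + 1) × Bool) : EuclideanSpace ℂ (Fin (m + 1)) →L[ℝ] ℝ :=
  (if j.2 then Complex.reCLM else Complex.imCLM).comp
    ((EuclideanSpace.proj (𝕜 := ℂ) j.1).restrictScalars ℝ)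

lemma cl_apply (j : Fin (m + 1) × Bool) (ξ : Sph m) :
    cl j (ξ : EuclideanSpace ℂ (Fin (m + 1))) = cf j ξ := by
  unfold cl cf
  by_cases hb : j.2 <;> simp [hb]

lemma mom_component (hlam : 0 < lam) (hu0 : ∀ ξ, 0 < u ξ)
    (hEL : ∀ ξ, Ilam m lam u ξ = u ξ ^ (p - 1))
    (hintp : Integrable (fun ξ => u ξ ^ p) (sphMeasure m))
    (hmom : (∫ ξ : Sph m, u ξ ^ p • (ξ : EuclideanSpace ℂ (Fin (m + 1)))
      ∂(sphMeasure m)) = 0) (j : Fin (m + 1) × Bool) :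
    (∫ ξ : Sph m, u ξ ^ p * cf j ξ ∂(sphMeasure m)) = 0 := by
  have h := (cl j).integral_comp_comm (integrable_vec hlam hu0 hEL hintp)
  rw [hmom, map_zero] at h
  rw [← h]
  refine integral_congr_ae (Filter.Eventually.of_forall fun ξ => ?_)
  simp only []
  rw [_root_.map_smul, smul_eq_mul, cl_apply]

lemma helper_div_le {a b K : ℝ} (h : a ≤ b) (hK : 0 ≤ K) : a / K ≤ b / K := by
  rcases hK.eq_or_lt with h0|h0
  · simp [← h0]
  · exact (div_le_div_iff_of_pos_right h0).mpr h

lemma inn_integrand_int (hu0 : ∀ ξ, 0 < u ξ) (hEL : ∀ ξ, Ilam m lam u ξ = u ξ ^ (p - 1))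
    (j : Fin (m + 1) × Bool) (ξ : Sph m) :
    Integrable (fun η => (u ξ * cf j ξ) * (u η * cf j η) / ker m lam ξ η) (sphMeasure m) := by
  have heq : ∀ η, (u ξ * cf j ξ) * (cf j η * (u η / ker m lam ξ η))
      = (u ξ * cf j ξ) * (u η * cf j η) / ker m lam ξ η := by
    intro η
    rw [mul_div_assoc]
    ring
  exact ((integrable_mul_ker hu0 hEL ξ (cf_cont j) 1 (abs_cf_le_one j)).const_mul
    (u ξ * cf j ξ)).congr (Filter.Eventually.of_forall heq)

lemma inn_abs_le (hu0 : ∀ ξ, 0 < u ξ) (hEL : ∀ ξ, Ilam m lam u ξ = u ξ ^ (p - 1))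
    (j : Fin (m + 1) × Bool) (ξ : Sph m) :
    |∫ η : Sph m, (u ξ * cf j ξ) * (u η * cf j η) / ker m lam ξ η ∂(sphMeasure m)|
      ≤ u ξ ^ p := by
  have h1 : |∫ η : Sph m, (u ξ * cf j ξ) * (u η * cf j η) / ker m lam ξ η ∂(sphMeasure m)|
      ≤ ∫ η : Sph m, |(u ξ * cf j ξ) * (u η * cf j η) / ker m lam ξ η| ∂(sphMeasure m) := by
    rw [← Real.norm_eq_abs]
    exact (norm_integral_le_integral_norm _).trans_eq
      (integral_congr_ae (Filter.Eventually.of_forall fun η => Real.norm_eq_abs _))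
  have hptw : ∀ η : Sph m, |(u ξ * cf j ξ) * (u η * cf j η) / ker m lam ξ η|
      ≤ u ξ * (u η / ker m lam ξ η) := by
    intro η
    rw [abs_div, abs_of_nonneg (ker_nonneg _ _ _), abs_mul, ← mul_div_assoc]
    apply helper_div_le _ (ker_nonneg _ _ _)
    rw [abs_mul, abs_mul, abs_of_nonneg (hu0 ξ).le, abs_of_nonneg (hu0 η).le]
    have hb1 := abs_cf_le_one j ξ
    have hb2 := abs_cf_le_one j η
    have h02 := abs_nonneg (cf j η)
    exact mul_le_mul (mul_le_of_le_one_right (hu0 ξ).le hb1)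
      (mul_le_of_le_one_right (hu0 η).le hb2) (mul_nonneg (hu0 η).le h02) (hu0 ξ).le
  have h2 : ∫ η : Sph m, |(u ξ * cf j ξ) * (u η * cf j η) / ker m lam ξ η| ∂(sphMeasure m)
      ≤ ∫ η : Sph m, u ξ * (u η / ker m lam ξ η) ∂(sphMeasure m) :=
    integral_mono (inn_integrand_int hu0 hEL j ξ).abs
      ((integrable_ker_u hu0 hEL ξ).const_mul _) hptw
  have h3 : ∫ η : Sph m, u ξ * (u η / ker m lam ξ η) ∂(sphMeasure m) = u ξ ^ p := by
    rw [integral_const_mul, ← Ilam_eq, hEL ξ, ← rpow_split1 hu0 ξ]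
  linarith [h1, h2, h3.le, h3.ge]

lemma inn_aesm (hlam : 0 < lam) (hu0 : ∀ ξ, 0 < u ξ)
    (hEL : ∀ ξ, Ilam m lam u ξ = u ξ ^ (p - 1)) (j : Fin (m + 1) × Bool) :
    AEStronglyMeasurable (fun ξ => ∫ η : Sph m,
      (u ξ * cf j ξ) * (u η * cf j η) / ker m lam ξ η ∂(sphMeasure m)) (sphMeasure m) := by
  have hprod : AEStronglyMeasurable (fun q : Sph m × Sph m =>
      (u q.1 * cf j q.1) * (u q.2 * cf j q.2) / ker m lam q.1 q.2)
      ((sphMeasure m).prod (sphMeasure m)) := by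
    have hu1 : AEMeasurable (fun q : Sph m × Sph m => u q.1)
        ((sphMeasure m).prod (sphMeasure m)) :=
      (aesm_u hlam hu0 hEL).aemeasurable.comp_quasiMeasurePreserving
        Measure.quasiMeasurePreserving_fst
    have hu2 : AEMeasurable (fun q : Sph m × Sph m => u q.2)
        ((sphMeasure m).prod (sphMeasure m)) :=
      (aesm_u hlam hu0 hEL).aemeasurable.comp_quasiMeasurePreserving
        Measure.quasiMeasurePreserving_snd
    have hc1 : AEMeasurable (fun q : Sph m × Sph m => cf j q.1)
        ((sphMeasure m).prod (sphMeasure m)) :=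
      ((cf_cont j).comp continuous_fst).measurable.aemeasurable
    have hc2 : AEMeasurable (fun q : Sph m × Sph m => cf j q.2)
        ((sphMeasure m).prod (sphMeasure m)) :=
      ((cf_cont j).comp continuous_snd).measurable.aemeasurable
    have hk : AEMeasurable (fun q : Sph m × Sph m => ker m lam q.1 q.2)
        ((sphMeasure m).prod (sphMeasure m)) :=
      (ker_cont2 hlam.le).measurable.aemeasurable
    exact (((hu1.mul hc1).mul (hu2.mul hc2)).div hk).aestronglyMeasurable
  exact hprod.integral_prod_right'

lemma inn_integrable (hlam : 0 < lam) (hu0 : ∀ ξ, 0 < u ξ)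
    (hEL : ∀ ξ, Ilam m lam u ξ = u ξ ^ (p - 1))
    (hintp : Integrable (fun ξ => u ξ ^ p) (sphMeasure m)) (j : Fin (m + 1) × Bool) :
    Integrable (fun ξ => ∫ η : Sph m,
      (u ξ * cf j ξ) * (u η * cf j η) / ker m lam ξ η ∂(sphMeasure m)) (sphMeasure m) := by
  refine Integrable.mono' hintp (inn_aesm hlam hu0 hEL j)
    (Filter.Eventually.of_forall fun ξ => ?_)
  rw [Real.norm_eq_abs]
  exact inn_abs_le hu0 hEL j ξ

lemma sum_inn (hu0 : ∀ ξ, 0 < u ξ) (hEL : ∀ ξ, Ilam m lam u ξ = u ξ ^ (p - 1)) (ξ : Sph m) :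
    (∫ η : Sph m, (hdot (ξ : EuclideanSpace ℂ (Fin (m + 1))) η).re * u ξ * u η
        / ker m lam ξ η ∂(sphMeasure m))
      = ∑ j : Fin (m + 1) × Bool, ∫ η : Sph m,
          (u ξ * cf j ξ) * (u η * cf j η) / ker m lam ξ η ∂(sphMeasure m) := by
  rw [← integral_finset_sum Finset.univ (fun j _ => inn_integrand_int hu0 hEL j ξ)]
  refine integral_congr_ae (Filter.Eventually.of_forall fun η => ?_)
  have hnum : ∑ j : Fin (m + 1) × Bool, (u ξ * cf j ξ) * (u η * cf j η)
      = (hdot (ξ : EuclideanSpace ℂ (Fin (m + 1))) η).re * u ξ * u η := by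
    calc ∑ j : Fin (m + 1) × Bool, (u ξ * cf j ξ) * (u η * cf j η)
        = ∑ j : Fin (m + 1) × Bool, (u ξ * u η) * (cf j ξ * cf j η) :=
          Finset.sum_congr rfl fun j _ => by ring
      _ = (u ξ * u η) * ∑ j : Fin (m + 1) × Bool, cf j ξ * cf j η := by
          rw [Finset.mul_sum]
      _ = (hdot (ξ : EuclideanSpace ℂ (Fin (m + 1))) η).re * u ξ * u η := by
          rw [cf_mul_sum]; ring
  show (hdot (ξ : EuclideanSpace ℂ (Fin (m + 1))) η).re * u ξ * u η / ker m lam ξ η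
      = ∑ j : Fin (m + 1) × Bool, (u ξ * cf j ξ) * (u η * cf j η) / ker m lam ξ η
  rw [← Finset.sum_div, hnum]

lemma rpow_split2 (hu0 : ∀ ξ, 0 < u ξ) (ξ : Sph m) :
    u ξ ^ (p - 2) * u ξ ^ (2 : ℕ) = u ξ ^ p := by
  rw [← Real.rpow_natCast (u ξ) 2, ← Real.rpow_add (hu0 ξ)]
  norm_num

lemma case1 (hlam : 0 < lam) (hp1 : 1 < p) (hu0 : ∀ ξ, 0 < u ξ)
    (hEL : ∀ ξ, Ilam m lam u ξ = u ξ ^ (p - 1))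
    (h2nd : ∀ f : Sph m → ℝ,
      (∫ ξ : Sph m, u ξ ^ (p - 1) * f ξ ∂(sphMeasure m)) = 0 →
      (∫ ξ : Sph m, ∫ η : Sph m, f ξ * f η /
          ‖(1 : ℂ) - hdot (ξ : EuclideanSpace ℂ (Fin (m + 1))) η‖ ^ (lam / 2)
          ∂(sphMeasure m) ∂(sphMeasure m)) ≤
        (p - 1) * ∫ ξ : Sph m, u ξ ^ (p - 2) * f ξ ^ 2 ∂(sphMeasure m))
    (hmom : (∫ ξ : Sph m, u ξ ^ p • (ξ : EuclideanSpace ℂ (Fin (m + 1)))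
      ∂(sphMeasure m)) = 0)
    (hintp : Integrable (fun ξ => u ξ ^ p) (sphMeasure m)) :
    (∫ ξ : Sph m, ∫ η : Sph m,
        (hdot (ξ : EuclideanSpace ℂ (Fin (m + 1))) η).re * u ξ * u η
          / ker m lam ξ η ∂(sphMeasure m) ∂(sphMeasure m))
      ≤ (p - 1) * ∫ ξ : Sph m, u ξ ^ p ∂(sphMeasure m) := by
  -- orthogonality for each test function
  have horth : ∀ j : Fin (m + 1) × Bool,
      (∫ ξ : Sph m, u ξ ^ (p - 1) * (u ξ * cf j ξ) ∂(sphMeasure m)) = 0 := by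
    intro j
    rw [← mom_component hlam hu0 hEL hintp hmom j]
    refine integral_congr_ae (Filter.Eventually.of_forall fun ξ => ?_)
    show u ξ ^ (p - 1) * (u ξ * cf j ξ) = u ξ ^ p * cf j ξ
    rw [rpow_split1 (p := p) hu0 ξ]
    ring
  -- apply the second variation inequality
  have happ : ∀ j : Fin (m + 1) × Bool,
      (∫ ξ : Sph m, ∫ η : Sph m,
          (u ξ * cf j ξ) * (u η * cf j η) / ker m lam ξ η ∂(sphMeasure m) ∂(sphMeasure m))
        ≤ (p - 1) * ∫ ξ : Sph m, u ξ ^ p * cf j ξ ^ (2:ℕ) ∂(sphMeasure m) := by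
    intro j
    have h := h2nd (fun ξ => u ξ * cf j ξ) (horth j)
    simp only [ker_def] at h
    refine h.trans (le_of_eq ?_)
    congr 1
    refine integral_congr_ae (Filter.Eventually.of_forall fun ξ => ?_)
    show u ξ ^ (p - 2) * (u ξ * cf j ξ) ^ (2:ℕ) = u ξ ^ p * cf j ξ ^ (2:ℕ)
    rw [mul_pow, ← mul_assoc, rpow_split2 hu0 ξ]
  -- summation
  calc (∫ ξ : Sph m, ∫ η : Sph m,
        (hdot (ξ : EuclideanSpace ℂ (Fin (m + 1))) η).re * u ξ * u η
          / ker m lam ξ η ∂(sphMeasure m) ∂(sphMeasure m))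
      = ∫ ξ : Sph m, ∑ j : Fin (m + 1) × Bool, ∫ η : Sph m,
          (u ξ * cf j ξ) * (u η * cf j η) / ker m lam ξ η ∂(sphMeasure m) ∂(sphMeasure m) :=
        integral_congr_ae (Filter.Eventually.of_forall fun ξ => sum_inn hu0 hEL ξ)
    _ = ∑ j : Fin (m + 1) × Bool, ∫ ξ : Sph m, ∫ η : Sph m,
          (u ξ * cf j ξ) * (u η * cf j η) / ker m lam ξ η ∂(sphMeasure m) ∂(sphMeasure m) :=
        integral_finset_sum _ (fun j _ => inn_integrable hlam hu0 hEL hintp j)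
    _ ≤ ∑ j : Fin (m + 1) × Bool, (p - 1) * ∫ ξ : Sph m,
          u ξ ^ p * cf j ξ ^ (2:ℕ) ∂(sphMeasure m) :=
        Finset.sum_le_sum fun j _ => happ j
    _ = (p - 1) * ∑ j : Fin (m + 1) × Bool, ∫ ξ : Sph m,
          u ξ ^ p * cf j ξ ^ (2:ℕ) ∂(sphMeasure m) := by
        rw [Finset.mul_sum]
    _ = (p - 1) * ∫ ξ : Sph m, ∑ j : Fin (m + 1) × Bool,
          u ξ ^ p * cf j ξ ^ (2:ℕ) ∂(sphMeasure m) := by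
        congr 1
        rw [← integral_finset_sum]
        intro j _
        have hb : ∀ ξ : Sph m, |cf j ξ ^ (2:ℕ)| ≤ 1 := by
          intro ξ
          rw [abs_pow]
          exact pow_le_one₀ (abs_nonneg _) (abs_cf_le_one j ξ)
        exact (hintp.bdd_mul (c := 1) ((((cf_cont j).pow 2)).aestronglyMeasurable)
          (Filter.Eventually.of_forall fun ξ => by simpa [Real.norm_eq_abs] using hb ξ)).congr
          (Filter.Eventually.of_forall fun ξ => by simp only [Pi.pow_apply]; ring)
    _ = (p - 1) * ∫ ξ : Sph m, u ξ ^ p ∂(sphMeasure m) := by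
        congr 1
        refine integral_congr_ae (Filter.Eventually.of_forall fun ξ => ?_)
        show ∑ j : Fin (m + 1) × Bool, u ξ ^ p * cf j ξ ^ (2:ℕ) = u ξ ^ p
        rw [← Finset.mul_sum, cf_sum_sq, mul_one]

end Main
end DIB

theorem double_integral_bound {m : ℕ} (hm : 1 ≤ m) (lam : ℝ) (hlam0 : 0 < lam)
    (hlam1 : lam < 2 * m + 2) (p : ℝ) (hp : 2 * (2 * m + 2) / (2 * (2 * m + 2) - lam) < p)
    (u : Sph m → ℝ) (hu0 : ∀ ξ, 0 < u ξ)
    (hEL : ∀ ξ, Ilam m lam u ξ = u ξ ^ (p - 1))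
    (h2nd : ∀ f : Sph m → ℝ,
      (∫ ξ : Sph m, u ξ ^ (p - 1) * f ξ ∂(sphMeasure m)) = 0 →
      (∫ ξ : Sph m, ∫ η : Sph m, f ξ * f η /
          ‖(1 : ℂ) - hdot (ξ : EuclideanSpace ℂ (Fin (m + 1))) η‖ ^ (lam / 2)
          ∂(sphMeasure m) ∂(sphMeasure m)) ≤
        (p - 1) * ∫ ξ : Sph m, u ξ ^ (p - 2) * f ξ ^ 2 ∂(sphMeasure m))
    (hmom : (∫ ξ : Sph m, u ξ ^ p • (ξ : EuclideanSpace ℂ (Fin (m + 1)))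
      ∂(sphMeasure m)) = 0) :
    (∫ ξ : Sph m, ∫ η : Sph m,
        (hdot (ξ : EuclideanSpace ℂ (Fin (m + 1))) η).re * u ξ * u η /
          ‖(1 : ℂ) - hdot (ξ : EuclideanSpace ℂ (Fin (m + 1))) η‖ ^ (lam / 2)
        ∂(sphMeasure m) ∂(sphMeasure m)) ≤
      (p - 1) * ∫ ξ : Sph m, u ξ ^ p ∂(sphMeasure m) := by
  have hmnn : (0:ℝ) ≤ (m:ℝ) := Nat.cast_nonneg m
  have hcast : (0:ℝ) < 2 * (2 * (m:ℝ) + 2) - lam := by linarith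
  have hp1 : 1 < p := by
    have h1 : (1:ℝ) < 2 * (2 * (m:ℝ) + 2) / (2 * (2 * (m:ℝ) + 2) - lam) :=
      (one_lt_div hcast).mpr (by linarith)
    linarith
  simp only [DIB.ker_def (m := m) (lam := lam)]
  by_cases hintp : Integrable (fun ξ => u ξ ^ p) (sphMeasure m)
  · exact DIB.case1 hlam0 hp1 hu0 hEL h2nd hmom hintp
  · exact DIB.case2 hm hlam0 hp1 hu0 hEL hintp
end
end
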